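/- arXiv:0811.4506 — 4 statements merged into one kernel-verified Lean document; each statement's English description precedes it below -/
import Mathlib

section
/- For every integer n ≥ 2 and every integer r with 1 ≤ r ≤ n−1, the identity g(n,r) = (−1)^r · ( a·g(n−1,r) + b·g(n−1,r−1) ) holds in the free algebra K⟨a,b⟩. -/
/-- `g K n r` is the signed sum `∑_p (-1)^{s(p)} p` over all words `p` of length `n`
in the two letters `a = ι 0`, `b = ι 1` of the free algebra `K⟨a,b⟩` containing exactly
`n - r` letters `a` and `r` letters `b`, where `s(p) = ∑_{j : α_j = b} j`
(positions indexed from 1). -/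
noncomputable def g (K : Type*) [Field K] (n r : ℕ) : FreeAlgebra K (Fin 2) :=
  ∑ p ∈ Finset.univ.filter
      (fun p : Fin n → Fin 2 => (Finset.univ.filter (fun i => p i = 1)).card = r),
    ((-1 : K) ^ (∑ i ∈ Finset.univ.filter (fun i => p i = 1), ((i : ℕ) + 1))) •
      (List.ofFn (fun i => FreeAlgebra.ι K (p i))).prod


open Finset in
lemma myCard_cons (m : ℕ) (x : Fin 2) (q : Fin m → Fin 2) :
    (univ.filter (fun i : Fin (m+1) => Fin.cons (α := fun _ => Fin 2) x q i = 1)).card =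
      (if x = 1 then 1 else 0) + (univ.filter (fun i => q i = 1)).card := by
  simp only [Finset.card_filter, Fin.sum_univ_succ, Fin.cons_zero, Fin.cons_succ]

open Finset in
lemma mySumpos_cons (m : ℕ) (x : Fin 2) (q : Fin m → Fin 2) :
    (∑ i ∈ univ.filter (fun i : Fin (m+1) => Fin.cons (α := fun _ => Fin 2) x q i = 1), ((i:ℕ)+1)) =
      ((if x = 1 then 1 else 0) + (∑ i ∈ univ.filter (fun i => q i = 1), ((i:ℕ)+1)))
        + (univ.filter (fun i => q i = 1)).card := by
  rw [Finset.sum_filter, Fin.sum_univ_succ]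
  simp only [Fin.cons_zero, Fin.cons_succ, Fin.val_zero, Fin.val_succ]
  have h1 : ∀ i : Fin m, (if q i = 1 then (i:ℕ) + 1 + 1 else 0)
      = (if q i = 1 then (i:ℕ) + 1 else 0) + (if q i = 1 then 1 else 0) := by
    intro i; split <;> simp
  rw [Finset.sum_congr rfl (fun i _ => h1 i), Finset.sum_add_distrib,
    ← Finset.sum_filter, ← Finset.card_filter]
  ring

lemma myProd_cons (K : Type*) [Field K] (m : ℕ) (x : Fin 2) (q : Fin m → Fin 2) :
    (List.ofFn (fun i : Fin (m+1) => FreeAlgebra.ι K (Fin.cons (α := fun _ => Fin 2) x q i))).prod =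
      FreeAlgebra.ι K x * (List.ofFn (fun i => FreeAlgebra.ι K (q i))).prod := by
  rw [List.ofFn_succ]
  simp [Fin.cons_zero, Fin.cons_succ]

/-- For every `n ≥ 2` and `1 ≤ r ≤ n - 1`, one has
`g(n,r) = (-1)^r · (a·g(n-1,r) + b·g(n-1,r-1))` in `K⟨a,b⟩`. -/
theorem g_eq_left_mul (K : Type*) [Field K] (n r : ℕ) (hn : 2 ≤ n)
    (hr1 : 1 ≤ r) (hr2 : r ≤ n - 1) :
    g K n r =
      ((-1 : K) ^ r) •
        (FreeAlgebra.ι K 0 * g K (n - 1) r + FreeAlgebra.ι K 1 * g K (n - 1) (r - 1)) := by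
  obtain ⟨m, rfl⟩ : ∃ m, n = m + 1 := ⟨n - 1, by omega⟩
  simp only [Nat.add_sub_cancel]
  unfold g
  rw [Finset.sum_filter, ← Equiv.sum_comp (Fin.consEquiv (fun _ => Fin 2))]
  simp only [Fin.consEquiv_apply]
  rw [Fintype.sum_prod_type, Fin.sum_univ_two]
  rw [smul_add, Finset.mul_sum, Finset.mul_sum, Finset.smul_sum, Finset.smul_sum,
    Finset.sum_filter, Finset.sum_filter]
  congr 1
  · refine Finset.sum_congr rfl (fun q _ => ?_)
    dsimp only
    rw [myCard_cons, mySumpos_cons, myProd_cons]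
    simp only [show ((0:Fin 2) = 1) = False by simp, if_false, zero_add]
    by_cases h : (Finset.univ.filter (fun i => q i = 1)).card = r
    · rw [if_pos h, if_pos h, h, mul_smul_comm, smul_smul, ← pow_add, add_comm r]
    · rw [if_neg h, if_neg h]
  · refine Finset.sum_congr rfl (fun q _ => ?_)
    dsimp only
    rw [myCard_cons, mySumpos_cons, myProd_cons]
    simp only [if_pos rfl, if_true]
    by_cases h : (Finset.univ.filter (fun i => q i = 1)).card = r - 1
    · have h2 : 1 + (Finset.univ.filter (fun i => q i = 1)).card = r := by omega
      rw [if_pos h2, if_pos h, h, mul_smul_comm, smul_smul, ← pow_add]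
      congr 2
      omega
    · have h2 : ¬ (1 + (Finset.univ.filter (fun i => q i = 1)).card = r) := by omega
      rw [if_neg h2, if_neg h]
end

section
/- The resolution (P•, d•) is minimal: for every n ≥ 1 the image of dⁿ : Pⁿ → Pⁿ⁻¹ is contained in J·Pⁿ⁻¹ + Pⁿ⁻¹·J, where J is the two-sided ideal of 𝒜 generated by the images of a, b, c (which is the Jacobson radical of 𝒜). -/
set_option synthInstance.maxHeartbeats 1000000
set_option maxHeartbeats 1000000

open TensorProduct MulOpposite

variable (K : Type*) [Field K]

inductive Arel : FreeAlgebra K (Fin 4) → FreeAlgebra K (Fin 4) → Prop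
  | ee : Arel (FreeAlgebra.ι K 0 * FreeAlgebra.ι K 0) (FreeAlgebra.ι K 0)
  | ea : Arel (FreeAlgebra.ι K 0 * FreeAlgebra.ι K 1) (FreeAlgebra.ι K 1)
  | ae : Arel (FreeAlgebra.ι K 1 * FreeAlgebra.ι K 0) (FreeAlgebra.ι K 1)
  | eb : Arel (FreeAlgebra.ι K 0 * FreeAlgebra.ι K 2) (FreeAlgebra.ι K 2)
  | be : Arel (FreeAlgebra.ι K 2 * FreeAlgebra.ι K 0) (FreeAlgebra.ι K 2)
  | ec : Arel (FreeAlgebra.ι K 0 * FreeAlgebra.ι K 3) (FreeAlgebra.ι K 3)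
  | ce : Arel (FreeAlgebra.ι K 3 * FreeAlgebra.ι K 0) 0
  | aa : Arel (FreeAlgebra.ι K 1 * FreeAlgebra.ι K 1) 0
  | bb : Arel (FreeAlgebra.ι K 2 * FreeAlgebra.ι K 2) 0
  | ab : Arel (FreeAlgebra.ι K 1 * FreeAlgebra.ι K 2) (FreeAlgebra.ι K 2 * FreeAlgebra.ι K 1)
  | ac : Arel (FreeAlgebra.ι K 1 * FreeAlgebra.ι K 3) 0

abbrev Aalg := RingQuot (Arel K)

noncomputable def eA : Aalg K := RingQuot.mkAlgHom K (Arel K) (FreeAlgebra.ι K 0)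
noncomputable def aA : Aalg K := RingQuot.mkAlgHom K (Arel K) (FreeAlgebra.ι K 1)
noncomputable def bA : Aalg K := RingQuot.mkAlgHom K (Arel K) (FreeAlgebra.ι K 2)
noncomputable def cA : Aalg K := RingQuot.mkAlgHom K (Arel K) (FreeAlgebra.ι K 3)

abbrev Env := (Aalg K) ⊗[K] (Aalg K)ᵐᵒᵖ

noncomputable def el (x y : Aalg K) : Env K := x ⊗ₜ[K] (op y)

noncomputable instance : Module (Env K) (Aalg K) := TensorProduct.Algebra.module

noncomputable def epsP (n : ℕ) : Fin (n + 2) → Env K := fun r =>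
  if n = 0 then (if (r : ℕ) = 0 then el K (eA K) (eA K)
      else el K (1 - eA K) (1 - eA K))
  else (if (r : ℕ) = n + 1 then el K (eA K) (1 - eA K) else el K (eA K) (eA K))

noncomputable def P (n : ℕ) : Submodule (Env K) (Fin (n + 2) → Env K) where
  carrier := {f | ∀ r, f r * epsP K n r = f r}
  add_mem' := by
    intro f g hf hg r
    simp only [Pi.add_apply, add_mul, hf r, hg r]
  zero_mem' := by
    intro r
    simp
  smul_mem' := by
    intro c f hf r
    simp only [Pi.smul_apply, smul_eq_mul, mul_assoc, hf r]

/-- The value of the differential `dⁿ` (for `n ≥ 1`) on the generator `e ⊗_r e`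
(resp. `e ⊗_{n+1} (1-e)`) of the `r`-th summand of `Pⁿ`, written as an element of the
free module `(𝒜ᵉ)^{n+1}` containing `Pⁿ⁻¹`; an elementary bimodule tensor `x ⊗_s y`
corresponds to `el x y` in coordinate `s`.  This encodes:
`d¹(e ⊗_0 e) = e ⊗_0 a - a ⊗_0 e`, `d¹(e ⊗_1 e) = -e ⊗_0 b + b ⊗_0 e`,
`d¹(e ⊗_2 (1-e)) = e ⊗_0 c - c ⊗_1 (1-e)`, and for `n ≥ 2`:
`dⁿ(e ⊗_0 e) = e ⊗_0 a + (-1)ⁿ a ⊗_0 e`,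
`dⁿ(e ⊗_r e) = e ⊗_r a + (-1)ⁿ e ⊗_{r-1} b + (-1)^{r+n}(a ⊗_r e + b ⊗_{r-1} e)`
for `1 ≤ r ≤ n-1`,
`dⁿ(e ⊗_n e) = (-1)ⁿ e ⊗_{n-1} b + b ⊗_{n-1} e`,
`dⁿ(e ⊗_{n+1} (1-e)) = e ⊗_0 c + (-1)ⁿ a ⊗_n (1-e)`. -/
noncomputable def vmat (n : ℕ) (r : Fin (n + 2)) : Fin (n + 1) → Env K := fun s =>
  if (r : ℕ) = n + 1 then
    (if (s : ℕ) = 0 then el K (eA K) (cA K) else 0) +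
      (if (s : ℕ) = n then
        (-1 : Env K) ^ n * el K (if n = 1 then cA K else aA K) (1 - eA K) else 0)
  else if (r : ℕ) = n then
    (if (s : ℕ) + 1 = n then
      (-1 : Env K) ^ n * el K (eA K) (bA K) + el K (bA K) (eA K) else 0)
  else if (r : ℕ) = 0 then
    (if (s : ℕ) = 0 then el K (eA K) (aA K) + (-1 : Env K) ^ n * el K (aA K) (eA K) else 0)
  else
    (if (s : ℕ) = (r : ℕ) then
      el K (eA K) (aA K) + (-1 : Env K) ^ ((r : ℕ) + n) * el K (aA K) (eA K) else 0) +
    (if (s : ℕ) + 1 = (r : ℕ) then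
      (-1 : Env K) ^ n * el K (eA K) (bA K) +
        (-1 : Env K) ^ ((r : ℕ) + n) * el K (bA K) (eA K) else 0)

/-- The differential `dⁿ : Pⁿ → Pⁿ⁻¹` for `n ≥ 1`, as an `𝒜ᵉ`-linear (i.e. bimodule) map
defined on the ambient free module. -/
noncomputable def D (n : ℕ) : (Fin (n + 2) → Env K) →ₗ[Env K] (Fin (n + 1) → Env K) where
  toFun f := ∑ r, f r • vmat K n r
  map_add' f g := by
    simp [add_smul, Finset.sum_add_distrib]
  map_smul' c f := by
    simp [mul_smul, Finset.smul_sum]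
    exact Finset.sum_congr rfl fun x _ => by ext i; simp [mul_assoc]

/-- The multiplication map `d⁰ : P⁰ → 𝒜`, `x ⊗ y ↦ xy`, as an `𝒜ᵉ`-linear map
defined on the ambient free module (the generator `e ⊗_0 e` is sent to `e·e = e`
and `(1-e) ⊗_1 (1-e)` to `(1-e)·(1-e) = 1-e`). -/
noncomputable def D0 : (Fin 2 → Env K) →ₗ[Env K] Aalg K where
  toFun f := f 0 • eA K + f 1 • (1 - eA K)
  map_add' f g := by
    simp only [Pi.add_apply, add_smul]
    abel
  map_smul' c f := by
    simp [mul_smul]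

/-- The two-sided ideal `J` of `𝒜` generated by (the images of) `a`, `b`, `c`
(the Jacobson radical of `𝒜`), realised as the `𝒜ᵉ`-submodule of `𝒜` spanned by
`a`, `b`, `c` (the `𝒜ᵉ`-action provides multiplication on both sides). -/
noncomputable def Jrad : Submodule (Env K) (Aalg K) :=
  Submodule.span (Env K) {aA K, bA K, cA K}

/-- The sub-bimodule `J·Pⁿ + Pⁿ·J` of `Pⁿ`, generated by all elements `j·x` and `x·j`
with `j ∈ J` and `x ∈ Pⁿ` (`j·x = (j ⊗ 1ᵒᵖ) • x` and `x·j = (1 ⊗ jᵒᵖ) • x`). -/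
noncomputable def radP (n : ℕ) : Submodule (Env K) (Fin (n + 2) → Env K) :=
  Submodule.span (Env K)
    {z | ∃ j ∈ Jrad K, ∃ x ∈ P K n, z = el K j 1 • x ∨ z = el K 1 j • x}

-- helper lemmas
lemma el_mul_el (x y z w : Aalg K) : el K x y * el K z w = el K (x * z) (w * y) := by
  simp [el, Algebra.TensorProduct.tmul_mul_tmul, ← op_mul]

lemma rel_ee : eA K * eA K = eA K := by
  rw [eA, ← map_mul]; exact RingQuot.mkAlgHom_rel K (Arel.ee (K := K))
lemma rel_ea : eA K * aA K = aA K := by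
  rw [eA, aA, ← map_mul]; exact RingQuot.mkAlgHom_rel K (Arel.ea (K := K))
lemma rel_ae : aA K * eA K = aA K := by
  rw [eA, aA, ← map_mul]; exact RingQuot.mkAlgHom_rel K (Arel.ae (K := K))
lemma rel_eb : eA K * bA K = bA K := by
  rw [eA, bA, ← map_mul]; exact RingQuot.mkAlgHom_rel K (Arel.eb (K := K))
lemma rel_be : bA K * eA K = bA K := by
  rw [eA, bA, ← map_mul]; exact RingQuot.mkAlgHom_rel K (Arel.be (K := K))
lemma rel_ec : eA K * cA K = cA K := by
  rw [eA, cA, ← map_mul]; exact RingQuot.mkAlgHom_rel K (Arel.ec (K := K))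
lemma rel_ce : cA K * eA K = 0 := by
  rw [eA, cA, ← map_mul]
  have := RingQuot.mkAlgHom_rel K (Arel.ce (K := K))
  simpa using this

lemma one_sub_e_idem : (1 - eA K) * (1 - eA K) = 1 - eA K := by
  rw [sub_mul, one_mul, mul_sub, mul_one, rel_ee]; abel

lemma c_sub : cA K * (1 - eA K) = cA K := by
  rw [mul_sub, mul_one, rel_ce, sub_zero]

lemma epsP_le (n : ℕ) (s : Fin (n + 2)) (h : (s : ℕ) ≤ n) :
    epsP K n s = el K (eA K) (eA K) := by
  unfold epsP
  split_ifs <;> first | rfl | omega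

lemma epsP_last_pos (n : ℕ) (s : Fin (n + 2)) (hn : n ≠ 0) (h : (s : ℕ) = n + 1) :
    epsP K n s = el K (eA K) (1 - eA K) := by
  unfold epsP
  split_ifs <;> first | rfl | omega

lemma epsP_last_zero (s : Fin 2) (h : (s : ℕ) = 1) :
    epsP K 0 s = el K (1 - eA K) (1 - eA K) := by
  unfold epsP
  split_ifs <;> first | rfl | omega

lemma epsP_idem (n : ℕ) (s : Fin (n + 2)) : epsP K n s * epsP K n s = epsP K n s := by
  unfold epsP
  split_ifs <;> simp [el_mul_el, rel_ee, one_sub_e_idem]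

lemma single_eps_mem_P (n : ℕ) (s : Fin (n + 2)) : Pi.single s (epsP K n s) ∈ P K n := by
  intro r
  rcases eq_or_ne r s with h | h
  · subst h
    simp [Pi.single_eq_same, epsP_idem]
  · simp [Pi.single_eq_of_ne h]

lemma mem_radP_single (n : ℕ) (s : Fin (n + 2)) (j : Aalg K)
    (hj : j ∈ ({aA K, bA K, cA K} : Set (Aalg K))) (v : Env K)
    (hv : v = el K j 1 * epsP K n s ∨ v = el K 1 j * epsP K n s) :
    Pi.single s v ∈ radP K n := by
  apply Submodule.subset_span
  refine ⟨j, Submodule.subset_span hj, (Pi.single s (epsP K n s) : Fin (n + 2) → Env K),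
    single_eps_mem_P K n s, ?_⟩
  rcases hv with h | h
  · left
    funext t
    rcases eq_or_ne t s with h' | h'
    · subst h'; simp [h, Pi.smul_apply, smul_eq_mul]
    · simp [Pi.single_eq_of_ne h', Pi.smul_apply, smul_eq_mul]
  · right
    funext t
    rcases eq_or_ne t s with h' | h'
    · subst h'; simp [h, Pi.smul_apply, smul_eq_mul]
    · simp [Pi.single_eq_of_ne h', Pi.smul_apply, smul_eq_mul]

lemma smul_single (n : ℕ) (k : Fin (n + 2)) (c v : Env K) :
    (Pi.single k (c * v) : Fin (n + 2) → Env K) = c • (Pi.single k v : Fin (n + 2) → Env K) := by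
  funext t
  rcases eq_or_ne t k with h | h
  · subst h; simp [Pi.smul_apply, smul_eq_mul]
  · simp [Pi.single_eq_of_ne h, Pi.smul_apply, smul_eq_mul]

lemma haj : aA K ∈ ({aA K, bA K, cA K} : Set (Aalg K)) := by simp
lemma hbj : bA K ∈ ({aA K, bA K, cA K} : Set (Aalg K)) := by simp
lemma hcj : cA K ∈ ({aA K, bA K, cA K} : Set (Aalg K)) := by simp

lemma vmat_mem (n : ℕ) (r : Fin (n + 3)) : vmat K (n + 1) r ∈ radP K n := by
  by_cases h1 : (r : ℕ) = n + 1 + 1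
  · have e1 : vmat K (n + 1) r =
        (Pi.single (⟨0, by omega⟩ : Fin (n + 2)) (el K (eA K) (cA K)) : Fin (n + 2) → Env K) +
        (Pi.single (⟨n + 1, by omega⟩ : Fin (n + 2))
          ((-1 : Env K) ^ (n + 1) * el K (if n + 1 = 1 then cA K else aA K) (1 - eA K)) :
            Fin (n + 2) → Env K) := by
      funext s
      simp only [vmat, h1, if_true, Pi.add_apply, Pi.single_apply, Fin.ext_iff, Fin.val_mk]
    rw [e1]
    refine Submodule.add_mem _ ?_ ?_
    · refine mem_radP_single K n _ (cA K) (hcj K) _ (Or.inr ?_)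
      rw [epsP_le K n _ (by simp)]
      simp [el_mul_el, rel_ec]
    · rw [smul_single]
      refine Submodule.smul_mem _ _ ?_
      by_cases hn : n = 0
      · subst hn
        refine mem_radP_single K 0 _ (cA K) (hcj K) _ (Or.inl ?_)
        rw [if_pos rfl, epsP_last_zero K _ (by simp)]
        simp [el_mul_el, c_sub]
      · refine mem_radP_single K n _ (aA K) (haj K) _ (Or.inl ?_)
        rw [if_neg (by omega), epsP_last_pos K n _ hn (by simp)]
        simp [el_mul_el, rel_ae]
  · by_cases h2 : (r : ℕ) = n + 1
    · have e1 : vmat K (n + 1) r =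
          (Pi.single (⟨n, by omega⟩ : Fin (n + 2))
            ((-1 : Env K) ^ (n + 1) * el K (eA K) (bA K) + el K (bA K) (eA K)) :
              Fin (n + 2) → Env K) := by
        funext s
        simp [vmat, h1, h2, Pi.single_apply, Fin.ext_iff, add_left_inj]
      rw [e1, Pi.single_add]
      refine Submodule.add_mem _ ?_ ?_
      · rw [smul_single]
        refine Submodule.smul_mem _ _ ?_
        refine mem_radP_single K n _ (bA K) (hbj K) _ (Or.inr ?_)
        rw [epsP_le K n _ (by simp)]
        simp [el_mul_el, rel_eb]
      · refine mem_radP_single K n _ (bA K) (hbj K) _ (Or.inl ?_)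
        rw [epsP_le K n _ (by simp)]
        simp [el_mul_el, rel_be]
    · by_cases h3 : (r : ℕ) = 0
      · have e1 : vmat K (n + 1) r =
            (Pi.single (⟨0, by omega⟩ : Fin (n + 2))
              (el K (eA K) (aA K) + (-1 : Env K) ^ (n + 1) * el K (aA K) (eA K)) :
                Fin (n + 2) → Env K) := by
          funext s
          simp only [vmat, h1, h2, if_false]
          simp only [h3, if_true, Pi.single_apply, Fin.ext_iff, Fin.val_mk]
        rw [e1, Pi.single_add]
        refine Submodule.add_mem _ ?_ ?_
        · refine mem_radP_single K n _ (aA K) (haj K) _ (Or.inr ?_)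
          rw [epsP_le K n _ (by simp)]
          simp [el_mul_el, rel_ea]
        · rw [smul_single]
          refine Submodule.smul_mem _ _ ?_
          refine mem_radP_single K n _ (aA K) (haj K) _ (Or.inl ?_)
          rw [epsP_le K n _ (by simp)]
          simp [el_mul_el, rel_ae]
      · have hge : 1 ≤ (r : ℕ) := by omega
        have hle : (r : ℕ) ≤ n := by have := r.isLt; omega
        have e1 : vmat K (n + 1) r =
            (Pi.single (⟨(r : ℕ), by omega⟩ : Fin (n + 2))
              (el K (eA K) (aA K) +
                (-1 : Env K) ^ ((r : ℕ) + (n + 1)) * el K (aA K) (eA K)) :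
                  Fin (n + 2) → Env K) +
            (Pi.single (⟨(r : ℕ) - 1, by omega⟩ : Fin (n + 2))
              ((-1 : Env K) ^ (n + 1) * el K (eA K) (bA K) +
                (-1 : Env K) ^ ((r : ℕ) + (n + 1)) * el K (bA K) (eA K)) :
                  Fin (n + 2) → Env K) := by
          funext s
          have hc : ((s : ℕ) + 1 = (r : ℕ)) = ((s : ℕ) = (r : ℕ) - 1) := propext (by omega)
          simp only [vmat, h1, h2, h3, if_false, ite_false, Pi.add_apply]
          simp only [hc]
          simp [Pi.single_apply, Fin.ext_iff]
        rw [e1]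
        refine Submodule.add_mem _ ?_ ?_
        · rw [Pi.single_add]
          refine Submodule.add_mem _ ?_ ?_
          · refine mem_radP_single K n _ (aA K) (haj K) _ (Or.inr ?_)
            rw [epsP_le K n _ (by simpa using hle)]
            simp [el_mul_el, rel_ea]
          · rw [smul_single]
            refine Submodule.smul_mem _ _ ?_
            refine mem_radP_single K n _ (aA K) (haj K) _ (Or.inl ?_)
            rw [epsP_le K n _ (by simp; omega)]
            simp [el_mul_el, rel_ae]
        · rw [Pi.single_add]
          refine Submodule.add_mem _ ?_ ?_
          · rw [smul_single]
            refine Submodule.smul_mem _ _ ?_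
            refine mem_radP_single K n _ (bA K) (hbj K) _ (Or.inr ?_)
            rw [epsP_le K n _ (by simp; omega)]
            simp [el_mul_el, rel_eb]
          · rw [smul_single]
            refine Submodule.smul_mem _ _ ?_
            refine mem_radP_single K n _ (bA K) (hbj K) _ (Or.inl ?_)
            rw [epsP_le K n _ (by simp; omega)]
            simp [el_mul_el, rel_be]

/-- The resolution `(P•, d•)` is minimal: for every `n ≥ 1` the image of
`dⁿ : Pⁿ → Pⁿ⁻¹` is contained in `J·Pⁿ⁻¹ + Pⁿ⁻¹·J`, where `J` is the two-sided ideal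
of `𝒜` generated by the images of `a`, `b`, `c`.
(Here `D K (n+1)` is `dⁿ⁺¹`.) -/
theorem resolution_minimal (K : Type*) [Field K] :
    ∀ n : ℕ, ∀ f ∈ P K (n + 1), D K (n + 1) f ∈ radP K n := by
  intro n f _
  have hD : D K (n + 1) f = ∑ r, f r • vmat K (n + 1) r := rfl
  rw [hD]
  exact Submodule.sum_mem _ fun r _ => Submodule.smul_mem _ _ (vmat_mem K n r)
end

section
/- For any field K, the center of Γ is not finitely generated as a K-algebra: there is no finite subset of the center Z(Γ) that generates Z(Γ) as a K-algebra. -/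
set_option synthInstance.maxHeartbeats 1000000
set_option maxHeartbeats 1000000

variable (K : Type*) [Field K]

/-- Relations defining `Γ = KQ/(ab + ba, bc)` (the Koszul dual situation):
generators `e = ι 0`, `a = ι 1`, `b = ι 2`, `c = ι 3`, with the path algebra
relations for the quiver with two vertices, loops `a, b` at vertex 1 and an
arrow `c`, together with `ab + ba = 0` and `bc = 0`. -/
inductive Grel : FreeAlgebra K (Fin 4) → FreeAlgebra K (Fin 4) → Prop
  | ee : Grel (FreeAlgebra.ι K 0 * FreeAlgebra.ι K 0) (FreeAlgebra.ι K 0)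
  | ea : Grel (FreeAlgebra.ι K 0 * FreeAlgebra.ι K 1) (FreeAlgebra.ι K 1)
  | ae : Grel (FreeAlgebra.ι K 1 * FreeAlgebra.ι K 0) (FreeAlgebra.ι K 1)
  | eb : Grel (FreeAlgebra.ι K 0 * FreeAlgebra.ι K 2) (FreeAlgebra.ι K 2)
  | be : Grel (FreeAlgebra.ι K 2 * FreeAlgebra.ι K 0) (FreeAlgebra.ι K 2)
  | ec : Grel (FreeAlgebra.ι K 0 * FreeAlgebra.ι K 3) (FreeAlgebra.ι K 3)
  | ce : Grel (FreeAlgebra.ι K 3 * FreeAlgebra.ι K 0) 0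
  | abba : Grel (FreeAlgebra.ι K 1 * FreeAlgebra.ι K 2 + FreeAlgebra.ι K 2 * FreeAlgebra.ι K 1) 0
  | bc : Grel (FreeAlgebra.ι K 2 * FreeAlgebra.ι K 3) 0

/-- The algebra `Γ` (whose center computes `Z_gr(E(𝒜)) ≅ HH*(𝒜)/𝒩`). -/
abbrev Galg := RingQuot (Grel K)

noncomputable def eG : Galg K := RingQuot.mkAlgHom K (Grel K) (FreeAlgebra.ι K 0)
noncomputable def aG : Galg K := RingQuot.mkAlgHom K (Grel K) (FreeAlgebra.ι K 1)
noncomputable def bG : Galg K := RingQuot.mkAlgHom K (Grel K) (FreeAlgebra.ι K 2)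
noncomputable def cG : Galg K := RingQuot.mkAlgHom K (Grel K) (FreeAlgebra.ι K 3)

/-- The substitution `y ↦ 0` on `K[x,y]` (with `x = X 0`, `y = X 1`). -/
noncomputable def substY0 : MvPolynomial (Fin 2) K →ₐ[K] MvPolynomial (Fin 2) K :=
  MvPolynomial.aeval (fun i => if i = 0 then MvPolynomial.X 0 else 0)

/-- The subalgebra `R = { f ∈ K[x,y] : f(x,0) is a constant } = K·1 + y·K[x,y]`
of the polynomial ring `K[x,y]`. -/
noncomputable def Rsub : Subalgebra K (MvPolynomial (Fin 2) K) :=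
  Subalgebra.comap (substY0 K) ⊥

-- ===== auxiliary development =====
open MvPolynomial

abbrev Wpoly := MvPolynomial (Fin 2) K
abbrev Vsp := Wpoly K × Wpoly K × K

noncomputable def sigmaW : Wpoly K →ₐ[K] Wpoly K :=
  aeval (fun i => if i = 0 then -X 0 else X 1)

@[simp] lemma sigmaW_X0 : sigmaW K (X 0) = -X 0 := by simp [sigmaW]
@[simp] lemma sigmaW_X1 : sigmaW K (X 1) = X 1 := by
  simp [sigmaW, show (1 : Fin 2) ≠ 0 by decide]

@[simp] lemma substY0_X0 : substY0 K (X 0) = X 0 := by simp [substY0]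
@[simp] lemma substY0_X1 : substY0 K (X 1) = 0 := by
  simp [substY0, show (1 : Fin 2) ≠ 0 by decide]

noncomputable def pr1 : Vsp K →ₗ[K] Wpoly K := LinearMap.fst K _ _
noncomputable def pr2 : Vsp K →ₗ[K] Wpoly K := (LinearMap.fst K _ _).comp (LinearMap.snd K _ _)
noncomputable def pr3 : Vsp K →ₗ[K] K := (LinearMap.snd K _ _).comp (LinearMap.snd K _ _)
noncomputable def mulx : Wpoly K →ₗ[K] Wpoly K := LinearMap.mulLeft K (X 0)
noncomputable def muly : Wpoly K →ₗ[K] Wpoly K := LinearMap.mulLeft K (X 1)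

noncomputable def Eop : Module.End K (Vsp K) := (pr1 K).prod ((pr2 K).prod 0)
noncomputable def Aop : Module.End K (Vsp K) :=
  ((mulx K).comp (pr1 K)).prod (((mulx K).comp (pr2 K)).prod 0)
noncomputable def Bop : Module.End K (Vsp K) :=
  ((muly K).comp ((sigmaW K).toLinearMap.comp (pr1 K))).prod 0
noncomputable def Cop : Module.End K (Vsp K) :=
  (0 : Vsp K →ₗ[K] Wpoly K).prod (((Algebra.linearMap K (Wpoly K)).comp (pr3 K)).prod 0)
noncomputable def rE : Module.End K (Vsp K) := (pr1 K).prod 0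
noncomputable def rB : Module.End K (Vsp K) := ((muly K).comp (pr1 K)).prod 0
noncomputable def rC : Module.End K (Vsp K) :=
  (0 : Vsp K →ₗ[K] Wpoly K).prod (((substY0 K).toLinearMap.comp (pr1 K)).prod 0)

@[simp] lemma Eop_apply (v : Vsp K) : Eop K v = (v.1, v.2.1, 0) := rfl
@[simp] lemma Aop_apply (v : Vsp K) : Aop K v = (X 0 * v.1, X 0 * v.2.1, 0) := rfl
@[simp] lemma Bop_apply (v : Vsp K) : Bop K v = (X 1 * sigmaW K v.1, 0, 0) := rfl
@[simp] lemma Cop_apply (v : Vsp K) : Cop K v = (0, algebraMap K (Wpoly K) v.2.2, 0) := rfl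
@[simp] lemma rE_apply (v : Vsp K) : rE K v = (v.1, 0, 0) := rfl
@[simp] lemma rB_apply (v : Vsp K) : rB K v = (X 1 * v.1, 0, 0) := rfl
@[simp] lemma rC_apply (v : Vsp K) : rC K v = (0, substY0 K v.1, 0) := rfl

noncomputable def genOps : Fin 4 → Module.End K (Vsp K) := ![Eop K, Aop K, Bop K, Cop K]

lemma genOps_rel : ∀ ⦃x y : FreeAlgebra K (Fin 4)⦄, Grel K x y →
    (FreeAlgebra.lift K (genOps K)) x = (FreeAlgebra.lift K (genOps K)) y := by
  intro x y h
  induction h <;>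
    simp only [map_mul, map_add, map_zero, FreeAlgebra.lift_ι_apply, genOps,
      Matrix.cons_val_zero, Matrix.cons_val_one, Matrix.head_cons,
      Matrix.cons_val_two, Matrix.cons_val_three, Matrix.tail_cons] <;>
    refine LinearMap.ext fun v => ?_ <;>
    simp only [Module.End.mul_apply, LinearMap.add_apply, LinearMap.zero_apply,
      Eop_apply, Aop_apply, Bop_apply, Cop_apply, map_mul, map_zero, map_one,
      sigmaW_X0, sigmaW_X1, map_neg] <;>
    simp [Prod.ext_iff] <;> ring

noncomputable def Phi : Galg K →ₐ[K] Module.End K (Vsp K) :=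
  RingQuot.liftAlgHom K ⟨FreeAlgebra.lift K (genOps K), genOps_rel K⟩

@[simp] lemma Phi_eG : Phi K (eG K) = Eop K := by
  rw [eG, Phi, RingQuot.liftAlgHom_mkAlgHom_apply, FreeAlgebra.lift_ι_apply]
  simp [genOps]
@[simp] lemma Phi_aG : Phi K (aG K) = Aop K := by
  rw [aG, Phi, RingQuot.liftAlgHom_mkAlgHom_apply, FreeAlgebra.lift_ι_apply]
  simp [genOps]
@[simp] lemma Phi_bG : Phi K (bG K) = Bop K := by
  rw [bG, Phi, RingQuot.liftAlgHom_mkAlgHom_apply, FreeAlgebra.lift_ι_apply]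
  simp [genOps]
@[simp] lemma Phi_cG : Phi K (cG K) = Cop K := by
  rw [cG, Phi, RingQuot.liftAlgHom_mkAlgHom_apply, FreeAlgebra.lift_ι_apply]
  simp [genOps]

lemma commute_Phi_of_gens (T : Module.End K (Vsp K))
    (h0 : Commute (Eop K) T) (h1 : Commute (Aop K) T)
    (h2 : Commute (Bop K) T) (h3 : Commute (Cop K) T) :
    ∀ γ : Galg K, Commute (Phi K γ) T := by
  intro γ
  obtain ⟨y, rfl⟩ := RingQuot.mkAlgHom_surjective K (Grel K) γ
  induction y with
  | grade0 r =>
      rw [AlgHom.commutes (RingQuot.mkAlgHom K (Grel K)) r, AlgHom.commutes (Phi K) r]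
      exact Algebra.commute_algebraMap_left r T
  | grade1 i =>
      fin_cases i
      · exact (congrArg (fun t => Commute t T) (Phi_eG K)).mpr h0
      · exact (congrArg (fun t => Commute t T) (Phi_aG K)).mpr h1
      · exact (congrArg (fun t => Commute t T) (Phi_bG K)).mpr h2
      · exact (congrArg (fun t => Commute t T) (Phi_cG K)).mpr h3
  | mul a b ha hb => rw [map_mul, map_mul]; exact ha.mul_left hb
  | add a b ha hb => rw [map_add, map_add]; exact ha.add_left hb

lemma commute_Phi_rE (γ : Galg K) : Commute (Phi K γ) (rE K) := by
  apply commute_Phi_of_gens <;>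
  · refine LinearMap.ext fun v => ?_
    simp [Module.End.mul_apply, Commute, SemiconjBy]

lemma commute_Phi_rB (γ : Galg K) : Commute (Phi K γ) (rB K) := by
  apply commute_Phi_of_gens <;>
  · refine LinearMap.ext fun v => ?_
    simp [Module.End.mul_apply, Commute, SemiconjBy, map_mul, mul_left_comm, mul_comm, mul_assoc]

lemma commute_Phi_rC (γ : Galg K) : Commute (Phi K γ) (rC K) := by
  apply commute_Phi_of_gens <;>
  · refine LinearMap.ext fun v => ?_
    simp [Module.End.mul_apply, Commute, SemiconjBy, map_mul]

/-- The "eΓe-part" of `γ`: the first component of `Φ(γ)` applied to the vector of `e`. -/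
noncomputable def Plin (γ : Galg K) : Wpoly K :=
  (Phi K γ ((1 : Wpoly K), (0 : Wpoly K), (0 : K))).1

lemma key_rE (γ : Galg K) (μ : Wpoly K) :
    Phi K γ (μ, 0, 0) = ((Phi K γ (μ, 0, 0)).1, 0, 0) := by
  have h := LinearMap.congr_fun (commute_Phi_rE K γ) (μ, (0 : Wpoly K), (0 : K))
  simp only [Module.End.mul_apply, rE_apply] at h
  exact h

lemma L1 (z : Galg K) (hA : Commute (Phi K z) (Aop K)) (l : Wpoly K) :
    Phi K z (l, 0, 0) = (Plin K z * l, 0, 0) := by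
  induction l using MvPolynomial.induction_on with
  | C a =>
      have : ((MvPolynomial.C a : Wpoly K), (0 : Wpoly K), (0 : K))
          = a • ((1 : Wpoly K), (0 : Wpoly K), (0 : K)) := by
        simp [Prod.smul_def, MvPolynomial.smul_eq_C_mul]
      rw [this, map_smul, key_rE]
      simp [Plin, MvPolynomial.smul_eq_C_mul, mul_comm]
  | add p q hp hq =>
      have : ((p + q : Wpoly K), (0 : Wpoly K), (0 : K))
          = ((p : Wpoly K), (0 : Wpoly K), (0 : K)) + (q, 0, 0) := by simp
      rw [this, map_add, hp, hq]
      simp [mul_add]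
  | mul_X p i hp =>
      fin_cases i <;> simp only [show ((fun (i : Fin 2) => i) ⟨0, by norm_num⟩ : Fin 2) = 0 from rfl,
        show ((fun (i : Fin 2) => i) ⟨1, by norm_num⟩ : Fin 2) = 1 from rfl]
      · have h1 : ((p * X 0 : Wpoly K), (0 : Wpoly K), (0 : K))
            = Aop K (p, 0, 0) := by simp [mul_comm]
        have h2 := LinearMap.congr_fun hA.symm ((p : Wpoly K), (0 : Wpoly K), (0 : K))
        simp only [Module.End.mul_apply] at h2
        rw [h1, ← h2, hp]
        simp [Prod.ext_iff]; ring
      · have h1 : ((p * X 1 : Wpoly K), (0 : Wpoly K), (0 : K))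
            = rB K (p, 0, 0) := by simp [mul_comm]
        have h2 := LinearMap.congr_fun (commute_Phi_rB K z).symm
          ((p : Wpoly K), (0 : Wpoly K), (0 : K))
        simp only [Module.End.mul_apply] at h2
        rw [h1, ← h2, hp]
        simp [Prod.ext_iff]; ring

lemma commute_Phi_center (z : Galg K) (hz : z ∈ Subalgebra.center K (Galg K)) (γ : Galg K) :
    Commute (Phi K z) (Phi K γ) := by
  have h := Subalgebra.mem_center_iff.mp hz γ
  show Phi K z * Phi K γ = Phi K γ * Phi K z
  rw [← map_mul, ← map_mul, ← h]

/-- For central `z`, the `y = 0` specialization of `Plin z` is a constant. -/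
lemma L2 (z : Galg K) (hz : z ∈ Subalgebra.center K (Galg K)) :
    ∃ w : K, substY0 K (Plin K z) = MvPolynomial.C w := by
  have hC : Commute (Phi K z) (Cop K) := by
    have := commute_Phi_center K z hz (cG K)
    rwa [Phi_cG] at this
  refine ⟨(Phi K z ((0 : Wpoly K), (0 : Wpoly K), (1 : K))).2.2, ?_⟩
  have h1 := LinearMap.congr_fun hC ((0 : Wpoly K), (0 : Wpoly K), (1 : K))
  simp only [Module.End.mul_apply, Cop_apply, map_one] at h1
  -- h1 : Phi z (0, 1, 0) = (0, algebraMap _ _ w, 0)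
  have h2 := LinearMap.congr_fun (commute_Phi_rC K z) ((1 : Wpoly K), (0 : Wpoly K), (0 : K))
  simp only [Module.End.mul_apply, rC_apply, map_one] at h2
  -- h2 : Phi z (0, 1, 0) = (0, substY0 (Phi z (1,0,0)).1, 0)
  have := h2.symm.trans h1
  have h3 := congrArg (fun v : Vsp K => v.2.1) this
  simpa [Plin, MvPolynomial.algebraMap_eq] using h3

lemma coeff_substY0 (f : Wpoly K) (m : ℕ) :
    MvPolynomial.coeff (Finsupp.single 0 m) (substY0 K f)
      = MvPolynomial.coeff (Finsupp.single 0 m) f := by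
  induction f using MvPolynomial.induction_on' with
  | add p q hp hq => rw [map_add, MvPolynomial.coeff_add, MvPolynomial.coeff_add, hp, hq]
  | monomial d c =>
      by_cases h : d 1 = 0
      · have hd : d = Finsupp.single 0 (d 0) := by
          ext i
          fin_cases i
          · simp
          · simpa using h
        rw [hd]
        have : substY0 K (MvPolynomial.monomial (Finsupp.single 0 (d 0)) c)
            = MvPolynomial.monomial (Finsupp.single 0 (d 0)) c := by
          rw [← MvPolynomial.C_mul_X_pow_eq_monomial, map_mul, map_pow]
          simp [substY0]
        rw [this]
      · have hz : substY0 K (MvPolynomial.monomial d c) = 0 := by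
          rw [substY0, MvPolynomial.aeval_monomial (R := K)]
          have h1s : (1 : Fin 2) ∈ d.support := Finsupp.mem_support_iff.mpr h
          have hzero :
              (d.prod fun i k => (if i = 0 then MvPolynomial.X 0 else (0 : Wpoly K)) ^ k)
              = 0 := by
            refine Finset.prod_eq_zero h1s ?_
            simp [zero_pow h]
          rw [hzero, mul_zero]
        rw [hz, MvPolynomial.coeff_zero, MvPolynomial.coeff_monomial, if_neg]
        intro hcon
        apply h
        rw [hcon]
        simp [Finsupp.single_apply]

/-- Bounded-degree invariant: `y⁰`-slice constant; `y¹`-slice of `x`-degree `≤ D`;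
`y²`-slice of `x`-degree `≤ 2D`. -/
def Ucond (D : ℕ) (f : Wpoly K) : Prop :=
  ∀ u : Fin 2 →₀ ℕ,
    (u 1 = 0 → u 0 ≠ 0 → MvPolynomial.coeff u f = 0) ∧
    (u 1 = 1 → D < u 0 → MvPolynomial.coeff u f = 0) ∧
    (u 1 = 2 → 2 * D < u 0 → MvPolynomial.coeff u f = 0)

lemma Ucond_C (D : ℕ) (c : K) : Ucond K D (MvPolynomial.C c) := by
  intro u
  have hcc : ∀ (h : u ≠ 0), MvPolynomial.coeff u (MvPolynomial.C c : Wpoly K) = 0 := by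
    intro h
    rw [MvPolynomial.coeff_C, if_neg (fun hc => h hc.symm)]
  refine ⟨fun h1 h2 => hcc ?_, fun h1 h2 => hcc ?_, fun h1 h2 => hcc ?_⟩ <;>
    · intro hu0; rw [hu0] at h1 h2; simp_all

lemma Ucond_add (D : ℕ) (f g : Wpoly K) (hf : Ucond K D f) (hg : Ucond K D g) :
    Ucond K D (f + g) := by
  intro u
  obtain ⟨hf1, hf2, hf3⟩ := hf u
  obtain ⟨hg1, hg2, hg3⟩ := hg u
  refine ⟨fun h1 h2 => ?_, fun h1 h2 => ?_, fun h1 h2 => ?_⟩ <;>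
    rw [MvPolynomial.coeff_add] <;> simp_all

lemma Ucond_mul (D : ℕ) (f g : Wpoly K) (hf : Ucond K D f) (hg : Ucond K D g) :
    Ucond K D (f * g) := by
  intro u
  have main : ∀ (j : ℕ), u 1 = j → j ≤ 2 →
      ((j = 0 → u 0 ≠ 0) → (j = 1 → D < u 0) → (j = 2 → 2 * D < u 0) →
        MvPolynomial.coeff u (f * g) = 0) := by
    intro j hj hj2 c0 c1 c2
    rw [MvPolynomial.coeff_mul]
    apply Finset.sum_eq_zero
    rintro ⟨p, q⟩ hpq
    have hsum := Finset.HasAntidiagonal.mem_antidiagonal.mp hpq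
    have e0 : p 0 + q 0 = u 0 := by rw [← hsum]; simp
    have e1 : p 1 + q 1 = u 1 := by rw [← hsum]; simp
    obtain ⟨hp1, hp2, hp3⟩ := hf p
    obtain ⟨hq1, hq2, hq3⟩ := hg q
    rw [hj] at e1
    interval_cases j
    · rcases (show p 0 ≠ 0 ∨ q 0 ≠ 0 by omega) with h | h
      · rw [hp1 (by omega) h, zero_mul]
      · rw [hq1 (by omega) h, mul_zero]
    · rcases (show (p 1 = 0 ∧ q 1 = 1) ∨ (p 1 = 1 ∧ q 1 = 0) by omega) with ⟨ha, hb⟩ | ⟨ha, hb⟩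
      · by_cases hp0 : p 0 = 0
        · rw [hq2 hb (by omega), mul_zero]
        · rw [hp1 ha hp0, zero_mul]
      · by_cases hq0 : q 0 = 0
        · rw [hp2 ha (by omega), zero_mul]
        · rw [hq1 hb hq0, mul_zero]
    · rcases (show (p 1 = 0 ∧ q 1 = 2) ∨ (p 1 = 1 ∧ q 1 = 1) ∨ (p 1 = 2 ∧ q 1 = 0) by omega)
          with ⟨ha, hb⟩ | ⟨ha, hb⟩ | ⟨ha, hb⟩
      · by_cases hp0 : p 0 = 0
        · rw [hq3 hb (by omega), mul_zero]
        · rw [hp1 ha hp0, zero_mul]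
      · rcases (show D < p 0 ∨ D < q 0 by omega) with h | h
        · rw [hp2 ha h, zero_mul]
        · rw [hq2 hb h, mul_zero]
      · by_cases hq0 : q 0 = 0
        · rw [hp3 ha (by omega), zero_mul]
        · rw [hq1 hb hq0, mul_zero]
  refine ⟨fun h1 h2 => ?_, fun h1 h2 => ?_, fun h1 h2 => ?_⟩
  · exact main 0 h1 (by omega) (fun _ => h2) (by omega) (by omega)
  · exact main 1 h1 (by omega) (by omega) (fun _ => h2) (by omega)
  · exact main 2 h1 (by omega) (by omega) (by omega) (fun _ => h2)

section GalgRel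

lemma rel_ea_s11 : eG K * aG K = aG K := by
  simpa [eG, aG, map_mul] using RingQuot.mkAlgHom_rel K (Grel.ea (K := K))
lemma rel_eb_s11 : eG K * bG K = bG K := by
  simpa [eG, bG, map_mul] using RingQuot.mkAlgHom_rel K (Grel.eb (K := K))
lemma rel_ce_s11 : cG K * eG K = 0 := by
  simpa [cG, eG, map_mul] using RingQuot.mkAlgHom_rel K (Grel.ce (K := K))
lemma rel_ae_s11 : aG K * eG K = aG K := by
  simpa [eG, aG, map_mul] using RingQuot.mkAlgHom_rel K (Grel.ae (K := K))
lemma rel_be_s11 : bG K * eG K = bG K := by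
  simpa [eG, bG, map_mul] using RingQuot.mkAlgHom_rel K (Grel.be (K := K))
lemma rel_bc : bG K * cG K = 0 := by
  simpa [bG, cG, map_mul] using RingQuot.mkAlgHom_rel K (Grel.bc (K := K))
lemma rel_ba : bG K * aG K = -(aG K * bG K) := by
  have h : aG K * bG K + bG K * aG K = 0 := by
    simpa [aG, bG, map_mul, map_add] using RingQuot.mkAlgHom_rel K (Grel.abba (K := K))
  exact eq_neg_of_add_eq_zero_right h
lemma rel_ca : cG K * aG K = 0 := by
  rw [← rel_ea_s11, ← mul_assoc, rel_ce_s11, zero_mul]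
lemma rel_cb : cG K * bG K = 0 := by
  rw [← rel_eb_s11, ← mul_assoc, rel_ce_s11, zero_mul]

lemma comm_b_aa : Commute (bG K) (aG K * aG K) := by
  show bG K * (aG K * aG K) = aG K * aG K * bG K
  calc bG K * (aG K * aG K) = bG K * aG K * aG K := (mul_assoc _ _ _).symm
    _ = -(aG K * bG K) * aG K := by rw [rel_ba]
    _ = -(aG K * bG K * aG K) := neg_mul (aG K * bG K) (aG K)
    _ = -(aG K * (bG K * aG K)) := by rw [mul_assoc]
    _ = -(aG K * -(aG K * bG K)) := by rw [rel_ba]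
    _ = - -(aG K * (aG K * bG K)) := by rw [mul_neg (aG K) (aG K * bG K)]
    _ = aG K * (aG K * bG K) := neg_neg _
    _ = aG K * aG K * bG K := (mul_assoc _ _ _).symm

lemma comm_bb_a : Commute (bG K * bG K) (aG K) := by
  show bG K * bG K * aG K = aG K * (bG K * bG K)
  calc bG K * bG K * aG K = bG K * (bG K * aG K) := mul_assoc _ _ _
    _ = bG K * -(aG K * bG K) := by rw [rel_ba]
    _ = -(bG K * (aG K * bG K)) := mul_neg (bG K) (aG K * bG K)
    _ = -(bG K * aG K * bG K) := by rw [mul_assoc]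
    _ = -(-(aG K * bG K) * bG K) := by rw [rel_ba]
    _ = - -(aG K * bG K * bG K) := by rw [neg_mul (aG K * bG K) (bG K)]
    _ = aG K * bG K * bG K := neg_neg _
    _ = aG K * (bG K * bG K) := mul_assoc _ _ _

lemma e_mul_apow_mul (n : ℕ) (w : Galg K) (hw : eG K * w = w) :
    eG K * (aG K ^ n * w) = aG K ^ n * w := by
  cases n with
  | zero => simpa using hw
  | succ k =>
      rw [pow_succ', mul_assoc (aG K), ← mul_assoc (eG K), rel_ea_s11]

lemma mem_center_of_commutes (z : Galg K) (he : Commute z (eG K)) (ha : Commute z (aG K))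
    (hb : Commute z (bG K)) (hc : Commute z (cG K)) :
    z ∈ Subalgebra.center K (Galg K) := by
  rw [Subalgebra.mem_center_iff]
  intro γ
  obtain ⟨y, rfl⟩ := RingQuot.mkAlgHom_surjective K (Grel K) γ
  induction y with
  | grade0 r =>
      rw [AlgHom.commutes (RingQuot.mkAlgHom K (Grel K)) r]
      exact Algebra.commutes r z
  | grade1 i =>
      fin_cases i
      exacts [he.symm.eq, ha.symm.eq, hb.symm.eq, hc.symm.eq]
  | mul a b ha' hb' =>
      rw [map_mul, mul_assoc, hb', ← mul_assoc, ha', mul_assoc]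
  | add a b ha' hb' =>
      rw [map_add, add_mul, mul_add, ha', hb']

/-- The elements `a^(2M) b²` are central in `Γ`. -/
lemma zM_mem_center (M : ℕ) :
    aG K ^ (2 * M) * (bG K * bG K) ∈ Subalgebra.center K (Galg K) := by
  apply mem_center_of_commutes
  · -- commutes with e
    have hbb_e : bG K * bG K * eG K = bG K * bG K := by rw [mul_assoc, rel_be_s11]
    have he_bb : eG K * (bG K * bG K) = bG K * bG K := by rw [← mul_assoc, rel_eb_s11]
    show aG K ^ (2 * M) * (bG K * bG K) * eG K = eG K * (aG K ^ (2 * M) * (bG K * bG K))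
    rw [mul_assoc, hbb_e, e_mul_apow_mul K (2 * M) _ he_bb]
  · -- commutes with a
    exact ((Commute.refl (aG K)).pow_left (2 * M)).mul_left (comm_bb_a K)
  · -- commutes with b
    have h1 : Commute (aG K ^ (2 * M)) (bG K) := by
      have : Commute (bG K) ((aG K * aG K) ^ M) := (comm_b_aa K).pow_right M
      have hpow : (aG K * aG K) ^ M = aG K ^ (2 * M) := by
        rw [← sq, ← pow_mul]
      rw [hpow] at this
      exact this.symm
    exact h1.mul_left ((Commute.refl (bG K)).mul_left (Commute.refl (bG K)))
  · -- commutes with c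
    have hleft : aG K ^ (2 * M) * (bG K * bG K) * cG K = 0 := by
      rw [mul_assoc, mul_assoc, rel_bc, mul_zero, mul_zero]
    have hright : cG K * (aG K ^ (2 * M) * (bG K * bG K)) = 0 := by
      cases (Nat.eq_zero_or_pos (2 * M)) with
      | inl h =>
          rw [h, pow_zero, one_mul, ← mul_assoc, rel_cb, zero_mul]
      | inr h =>
          obtain ⟨k, hk⟩ := Nat.exists_eq_succ_of_ne_zero (Nat.pos_iff_ne_zero.mp h)
          rw [hk, pow_succ', mul_assoc, ← mul_assoc (cG K), rel_ca, zero_mul]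
    show aG K ^ (2 * M) * (bG K * bG K) * cG K = cG K * (aG K ^ (2 * M) * (bG K * bG K))
    rw [hleft, hright]

end GalgRel

lemma Apow_apply (n : ℕ) (μ : Wpoly K) :
    ((Aop K) ^ n) (μ, (0 : Wpoly K), (0 : K)) = (MvPolynomial.X 0 ^ n * μ, 0, 0) := by
  induction n with
  | zero => simp
  | succ k ih =>
      rw [pow_succ', Module.End.mul_apply, ih]
      simp only [Aop_apply, mul_zero]
      refine Prod.ext ?_ rfl
      simp only
      ring

lemma Plin_zM (M : ℕ) :
    Plin K (aG K ^ (2 * M) * (bG K * bG K))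
      = MvPolynomial.X 0 ^ (2 * M) * (MvPolynomial.X 1 * MvPolynomial.X 1) := by
  rw [Plin, map_mul, map_mul, map_pow, Phi_aG, Phi_bG, Module.End.mul_apply, Module.End.mul_apply]
  have h1 : Bop K ((1 : Wpoly K), (0 : Wpoly K), (0 : K)) = (MvPolynomial.X 1, 0, 0) := by simp
  have h2 : Bop K ((MvPolynomial.X 1 : Wpoly K), (0 : Wpoly K), (0 : K))
      = (MvPolynomial.X 1 * MvPolynomial.X 1, 0, 0) := by simp
  rw [h1, h2, Apow_apply]

lemma Plin_mul (x y : Galg K) (hx : x ∈ Subalgebra.center K (Galg K)) :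
    Plin K (x * y) = Plin K x * Plin K y := by
  have hA : Commute (Phi K x) (Aop K) := by
    have := commute_Phi_center K x hx (aG K)
    rwa [Phi_aG] at this
  show (Phi K (x * y) ((1 : Wpoly K), (0 : Wpoly K), (0 : K))).1 = _
  rw [map_mul, Module.End.mul_apply, key_rE, L1 K x hA]
  rfl

lemma Ucond_gen (D : ℕ) (z : Galg K) (hz : z ∈ Subalgebra.center K (Galg K))
    (hdeg : (Plin K z).totalDegree ≤ D) : Ucond K D (Plin K z) := by
  intro u
  have hsum : (∑ i ∈ u.support, u i) = u 0 + u 1 := by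
    rw [Finset.sum_subset (Finset.subset_univ u.support)
      (fun i _ hi => Finsupp.notMem_support_iff.mp hi)]
    exact Fin.sum_univ_two u
  refine ⟨fun h1 h2 => ?_, fun h1 h2 => ?_, fun h1 h2 => ?_⟩
  · -- y⁰ slice
    have hu : u = Finsupp.single 0 (u 0) := by
      ext i
      fin_cases i
      · simp
      · simp [h1, Finsupp.single_apply]
    obtain ⟨w, hw⟩ := L2 K z hz
    rw [hu, ← coeff_substY0, hw, MvPolynomial.coeff_C,
      if_neg (fun hcon => h2 (Finsupp.single_eq_zero.mp hcon.symm))]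
  · exact MvPolynomial.coeff_eq_zero_of_totalDegree_lt (by rw [hsum]; omega)
  · exact MvPolynomial.coeff_eq_zero_of_totalDegree_lt (by rw [hsum]; omega)


/-- For any field `K`, the center of `Γ` is not finitely generated as a `K`-algebra:
there is no finite subset of `Z(Γ)` generating `Z(Γ)` as a `K`-algebra. -/
theorem center_not_finiteType (K : Type*) [Field K] :
    ¬ Algebra.FiniteType K (Subalgebra.center K (Galg K)) := by
  intro hFT
  have hfg : (Subalgebra.center K (Galg K)).FG :=
    (Subalgebra.fg_iff_finiteType (Subalgebra.center K (Galg K))).mpr hFT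
  obtain ⟨s, hs⟩ := hfg
  have hsub : (↑s : Set (Galg K)) ⊆ (Subalgebra.center K (Galg K) : Set (Galg K)) := by
    rw [← hs]; exact Algebra.subset_adjoin
  set D : ℕ := s.sup (fun z => (Plin K z).totalDegree) with hD
  have inv : ∀ z ∈ Algebra.adjoin K (↑s : Set (Galg K)),
      z ∈ Subalgebra.center K (Galg K) ∧ Ucond K D (Plin K z) := by
    intro z hz
    induction hz using Algebra.adjoin_induction with
    | mem x hx =>
        exact ⟨hsub hx, Ucond_gen K D x (hsub hx)
          (Finset.le_sup (f := fun z => (Plin K z).totalDegree) hx)⟩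
    | algebraMap r =>
        refine ⟨Subalgebra.algebraMap_mem _ r, ?_⟩
        have hPr : Plin K (algebraMap K (Galg K) r) = MvPolynomial.C r := by
          rw [Plin, AlgHom.commutes, Module.algebraMap_end_apply]
          simp [MvPolynomial.smul_eq_C_mul]
        rw [hPr]
        exact Ucond_C K D r
    | add x y hx hy ihx ihy =>
        refine ⟨add_mem ihx.1 ihy.1, ?_⟩
        have hPadd : Plin K (x + y) = Plin K x + Plin K y := by
          rw [Plin, Plin, Plin, map_add]; rfl
        rw [hPadd]
        exact Ucond_add K D _ _ ihx.2 ihy.2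
    | mul x y hx hy ihx ihy =>
        refine ⟨mul_mem ihx.1 ihy.1, ?_⟩
        rw [Plin_mul K x y ihx.1]
        exact Ucond_mul K D _ _ ihx.2 ihy.2
  have hmem : aG K ^ (2 * (D + 1)) * (bG K * bG K) ∈ Algebra.adjoin K (↑s : Set (Galg K)) := by
    rw [hs]; exact zM_mem_center K (D + 1)
  have hU := (inv _ hmem).2
  have hcoeff := (hU (Finsupp.single 0 (2 * (D + 1)) + Finsupp.single 1 2)).2.2
  have hu1 : ((Finsupp.single (0 : Fin 2) (2 * (D + 1)) + Finsupp.single 1 2 : Fin 2 →₀ ℕ)) 1 = 2 := by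
    simp [Finsupp.single_apply]
  have hu0 : ((Finsupp.single (0 : Fin 2) (2 * (D + 1)) + Finsupp.single 1 2 : Fin 2 →₀ ℕ)) 0 = 2 * (D + 1) := by
    simp [Finsupp.single_apply]
  have h0 := hcoeff hu1 (by rw [hu0]; omega)
  rw [Plin_zM] at h0
  have h1 : MvPolynomial.coeff (Finsupp.single (0 : Fin 2) (2 * (D + 1)) + Finsupp.single 1 2)
      (MvPolynomial.X (R := K) 0 ^ (2 * (D + 1)) * (MvPolynomial.X 1 * MvPolynomial.X 1)) = 1 := by
    rw [show (MvPolynomial.X (R := K) (1 : Fin 2) * MvPolynomial.X 1)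
        = MvPolynomial.X 1 ^ 2 from (sq _).symm]
    rw [MvPolynomial.X_pow_eq_monomial, MvPolynomial.X_pow_eq_monomial,
      MvPolynomial.monomial_mul, MvPolynomial.coeff_monomial, if_pos rfl]
    norm_num
  rw [h0] at h1
  exact one_ne_zero h1.symm
end

section
/- Let K be a field and q ∈ K with q ≠ 0. Let Λ_q = K⟨x,y⟩/(x², xy + q·yx, y²). Then Λ_q is self-injective: Λ_q is injective as a (left) module over itself. -/
set_option synthInstance.maxHeartbeats 1000000
set_option maxHeartbeats 1000000

variable (K : Type*) [Field K]

/-- Relations defining `Λ_q = K⟨x,y⟩/(x², xy + q·yx, y²)`, with `x = ι 0`, `y = ι 1`. -/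
inductive Lrel (q : K) : FreeAlgebra K (Fin 2) → FreeAlgebra K (Fin 2) → Prop
  | xx : Lrel q (FreeAlgebra.ι K 0 * FreeAlgebra.ι K 0) 0
  | xy : Lrel q (FreeAlgebra.ι K 0 * FreeAlgebra.ι K 1 +
      q • (FreeAlgebra.ι K 1 * FreeAlgebra.ι K 0)) 0
  | yy : Lrel q (FreeAlgebra.ι K 1 * FreeAlgebra.ι K 1) 0

/-- The algebra `Λ_q` of Buchweitz–Green–Madsen–Solberg. -/
abbrev Lalg (q : K) := RingQuot (Lrel K q)

noncomputable def xL (q : K) : Lalg K q := RingQuot.mkAlgHom K (Lrel K q) (FreeAlgebra.ι K 0)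
noncomputable def yL (q : K) : Lalg K q := RingQuot.mkAlgHom K (Lrel K q) (FreeAlgebra.ι K 1)

/-! ### Multiplication relations in `Λ_q` -/

theorem rel_xx (q : K) : xL K q * xL K q = 0 := by
  have := RingQuot.mkAlgHom_rel K (Lrel.xx (K := K) (q := q))
  simpa [xL, map_mul] using this

theorem rel_yy (q : K) : yL K q * yL K q = 0 := by
  have := RingQuot.mkAlgHom_rel K (Lrel.yy (K := K) (q := q))
  simpa [yL, map_mul] using this

theorem rel_xy (q : K) : xL K q * yL K q + q • (yL K q * xL K q) = 0 := by
  have := RingQuot.mkAlgHom_rel K (Lrel.xy (K := K) (q := q))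
  simpa [xL, yL, map_mul, map_add, map_smul] using this

theorem rel_qyx (q : K) : q • (yL K q * xL K q) = -(xL K q * yL K q) := by
  have h := rel_xy K q
  linear_combination (norm := module) h

theorem rel_yx (q : K) (hq : q ≠ 0) : yL K q * xL K q = -q⁻¹ • (xL K q * yL K q) := by
  calc yL K q * xL K q = q⁻¹ • (q • (yL K q * xL K q)) := by
        rw [smul_smul, inv_mul_cancel₀ hq, one_smul]
  _ = -q⁻¹ • (xL K q * yL K q) := by rw [rel_qyx]; module

theorem rel_xxy (q : K) : xL K q * (xL K q * yL K q) = 0 := by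
  rw [← mul_assoc, rel_xx, zero_mul]

theorem rel_yxy (q : K) (hq : q ≠ 0) : yL K q * (xL K q * yL K q) = 0 := by
  rw [← mul_assoc, rel_yx K q hq, smul_mul_assoc, mul_assoc, rel_yy, mul_zero, smul_zero]

theorem rel_xyx (q : K) (hq : q ≠ 0) : (xL K q * yL K q) * xL K q = 0 := by
  rw [mul_assoc, rel_yx K q hq, mul_smul_comm, ← mul_assoc, rel_xx, zero_mul, smul_zero]

theorem rel_xyy (q : K) : (xL K q * yL K q) * yL K q = 0 := by
  rw [mul_assoc, rel_yy, mul_zero]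

theorem rel_xyxy (q : K) (hq : q ≠ 0) : (xL K q * yL K q) * (xL K q * yL K q) = 0 := by
  rw [← mul_assoc, rel_xyx K q hq, zero_mul]

/-! ### The spanning set `{1, x, y, xy}` -/

noncomputable def Sspan (q : K) : Submodule K (Lalg K q) :=
  Submodule.span K {1, xL K q, yL K q, xL K q * yL K q}

theorem mem_Sspan_mul (q : K) (hq : q ≠ 0) :
    ∀ u ∈ Sspan K q, ∀ v ∈ Sspan K q, u * v ∈ Sspan K q := by
  intro u hu
  induction hu using Submodule.span_induction with
  | mem u hu =>
    intro v hv
    induction hv using Submodule.span_induction with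
    | mem v hv =>
      simp only [Set.mem_insert_iff, Set.mem_singleton_iff] at hu hv
      have h1 : (1 : Lalg K q) ∈ Sspan K q := Submodule.subset_span (by simp)
      have hx : xL K q ∈ Sspan K q := Submodule.subset_span (by simp)
      have hy : yL K q ∈ Sspan K q := Submodule.subset_span (by simp)
      have hxy : xL K q * yL K q ∈ Sspan K q := Submodule.subset_span (by simp)
      rcases hu with rfl | rfl | rfl | rfl <;> rcases hv with rfl | rfl | rfl | rfl <;>
        (try simp only [one_mul, mul_one, rel_xx, rel_yy, rel_xy, rel_xxy, rel_yxy K q hq,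
          rel_xyx K q hq, rel_xyy, rel_xyxy K q hq, rel_yx K q hq]) <;>
        first
          | exact h1 | exact hx | exact hy | exact hxy
          | exact Submodule.zero_mem _
          | exact Submodule.smul_mem _ _ hxy
    | zero => simp [Submodule.zero_mem]
    | add v w _ _ hv hw => rw [mul_add]; exact Submodule.add_mem _ hv hw
    | smul c v _ hv => rw [mul_smul_comm]; exact Submodule.smul_mem _ _ hv
  | zero => intro v hv; simp [Submodule.zero_mem]
  | add u w _ _ hu hw => intro v hv; rw [add_mul]; exact Submodule.add_mem _ (hu v hv) (hw v hv)
  | smul c u _ hu => intro v hv; rw [smul_mul_assoc]; exact Submodule.smul_mem _ _ (hu v hv)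

theorem Sspan_eq_top (q : K) (hq : q ≠ 0) : Sspan K q = ⊤ := by
  rw [Submodule.eq_top_iff']
  intro w
  obtain ⟨a, rfl⟩ := RingQuot.mkAlgHom_surjective K (Lrel K q) w
  induction a with
  | grade0 r =>
    rw [AlgHom.commutes]
    rw [Algebra.algebraMap_eq_smul_one]
    exact Submodule.smul_mem _ _ (Submodule.subset_span (by simp))
  | grade1 i =>
    fin_cases i
    · exact Submodule.subset_span (by simp [xL])
    · exact Submodule.subset_span (by simp [yL])
  | mul a b ha hb => rw [map_mul]; exact mem_Sspan_mul K q hq _ ha _ hb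
  | add a b ha hb => rw [map_add]; exact Submodule.add_mem _ ha hb

/-! ### A matrix representation giving the coefficient functional `lam` -/

def XM : Matrix (Fin 4) (Fin 4) K := !![0,0,0,0; 1,0,0,0; 0,0,0,0; 0,0,1,0]
def YM (q : K) : Matrix (Fin 4) (Fin 4) K := !![0,0,0,0; 0,0,0,0; 1,0,0,0; 0,-q⁻¹,0,0]

noncomputable def FM (q : K) : FreeAlgebra K (Fin 2) →ₐ[K] Matrix (Fin 4) (Fin 4) K :=
  FreeAlgebra.lift K ![XM K, YM K q]

theorem FM_rel (q : K) (hq : q ≠ 0) : ∀ ⦃a b⦄, Lrel K q a b → FM K q a = FM K q b := by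
  intro a b h
  cases h with
  | xx =>
    simp only [FM, map_mul, map_zero, FreeAlgebra.lift_ι_apply]
    show XM K * XM K = 0
    ext i j
    fin_cases i <;> fin_cases j <;>
      simp [XM, Matrix.mul_apply, Fin.sum_univ_four, Matrix.vecHead, Matrix.vecTail]
  | xy =>
    simp only [FM, map_add, map_mul, map_smul, map_zero, FreeAlgebra.lift_ι_apply]
    show XM K * YM K q + q • (YM K q * XM K) = 0
    ext i j
    fin_cases i <;> fin_cases j <;>
      simp [XM, YM, Matrix.mul_apply, Fin.sum_univ_four, Matrix.vecHead, Matrix.vecTail,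
        mul_inv_cancel₀ hq]
  | yy =>
    simp only [FM, map_mul, map_zero, FreeAlgebra.lift_ι_apply]
    show YM K q * YM K q = 0
    ext i j
    fin_cases i <;> fin_cases j <;>
      simp [YM, Matrix.mul_apply, Fin.sum_univ_four, Matrix.vecHead, Matrix.vecTail]

noncomputable def phiM (q : K) (hq : q ≠ 0) : Lalg K q →ₐ[K] Matrix (Fin 4) (Fin 4) K :=
  RingQuot.liftAlgHom K ⟨FM K q, FM_rel K q hq⟩

theorem phiM_x (q : K) (hq : q ≠ 0) : phiM K q hq (xL K q) = XM K := by
  simp [phiM, xL, RingQuot.liftAlgHom_mkAlgHom_apply, FM]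

theorem phiM_y (q : K) (hq : q ≠ 0) : phiM K q hq (yL K q) = YM K q := by
  simp [phiM, yL, RingQuot.liftAlgHom_mkAlgHom_apply, FM]

/-- The coefficient of `xy` with respect to the basis `1, x, y, xy`. -/
noncomputable def lam (q : K) (hq : q ≠ 0) : Lalg K q →ₗ[K] K :=
  (LinearMap.proj (0 : Fin 4)).comp ((LinearMap.proj (3 : Fin 4)).comp (phiM K q hq).toLinearMap)

theorem lam_apply (q : K) (hq : q ≠ 0) (w : Lalg K q) : lam K q hq w = phiM K q hq w 3 0 := rfl

theorem lam_one (q : K) (hq : q ≠ 0) : lam K q hq 1 = 0 := by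
  rw [lam_apply, map_one]
  simp [Matrix.one_apply]

theorem lam_x (q : K) (hq : q ≠ 0) : lam K q hq (xL K q) = 0 := by
  rw [lam_apply, phiM_x]
  simp [XM, Matrix.vecHead, Matrix.vecTail]

theorem lam_y (q : K) (hq : q ≠ 0) : lam K q hq (yL K q) = 0 := by
  rw [lam_apply, phiM_y]
  simp [YM, Matrix.vecHead, Matrix.vecTail]

theorem lam_xy (q : K) (hq : q ≠ 0) : lam K q hq (xL K q * yL K q) = 1 := by
  rw [lam_apply, map_mul, phiM_x, phiM_y]
  show (XM K * YM K q) 3 0 = 1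
  simp [XM, YM, Matrix.mul_apply, Fin.sum_univ_four, Matrix.vecHead, Matrix.vecTail]

theorem lam_qyx (q : K) (hq : q ≠ 0) : -(q * lam K q hq (yL K q * xL K q)) = 1 := by
  have h : lam K q hq (q • (yL K q * xL K q)) = lam K q hq (-(xL K q * yL K q)) := by
    rw [rel_qyx]
  rw [map_smul, map_neg, lam_xy K q hq, smul_eq_mul] at h
  rw [h]; ring

/-- Reconstruction of an element of `Λ_q` from the functional `lam`. -/
theorem lam_recon (q : K) (hq : q ≠ 0) (w : Lalg K q) :
    lam K q hq ((xL K q * yL K q) * w) • (1 : Lalg K q) +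
      (-(q * lam K q hq (yL K q * w))) • xL K q +
      lam K q hq (xL K q * w) • yL K q +
      lam K q hq w • (xL K q * yL K q) = w := by
  have hw : w ∈ Sspan K q := by rw [Sspan_eq_top K q hq]; trivial
  induction hw using Submodule.span_induction with
  | mem w hw =>
    simp only [Set.mem_insert_iff, Set.mem_singleton_iff] at hw
    rcases hw with rfl | rfl | rfl | rfl
    · rw [mul_one, mul_one, mul_one, lam_xy K q hq, lam_x, lam_y, lam_one]
      simp
    · rw [rel_xyx K q hq, map_zero, rel_xx, map_zero, lam_x K q hq, lam_qyx K q hq]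
      simp
    · rw [rel_xyy, map_zero, rel_yy, map_zero, lam_xy K q hq, lam_y K q hq]
      simp
    · rw [rel_xyxy K q hq, map_zero, rel_yxy K q hq, map_zero, rel_xxy, map_zero,
        lam_xy K q hq]
      simp
  | zero => simp
  | add u v _ _ hu hv =>
    rw [mul_add, mul_add, mul_add, map_add, map_add, map_add, map_add]
    linear_combination (norm := module) hu + hv
  | smul c u _ hu =>
    rw [mul_smul_comm, mul_smul_comm, mul_smul_comm, map_smul, map_smul, map_smul, map_smul]
    simp only [smul_eq_mul]
    linear_combination (norm := module) c • hu

/-! ### The main theorem -/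

/-- For `q ≠ 0`, the algebra `Λ_q` is self-injective: `Λ_q` is injective as a (left)
module over itself. -/
theorem Lalg_selfInjective (K : Type*) [Field K] (q : K) (hq : q ≠ 0) :
    Module.Injective (Lalg K q) (Lalg K q) := by
  classical
  constructor
  intro X Y _ _ _ _ f hf g
  letI : Module K X := Module.compHom X (algebraMap K (Lalg K q))
  letI : Module K Y := Module.compHom Y (algebraMap K (Lalg K q))
  have hsX : ∀ (c : K) (x : X), c • x = (algebraMap K (Lalg K q) c) • x := fun _ _ => rfl
  have hsY : ∀ (c : K) (y : Y), c • y = (algebraMap K (Lalg K q) c) • y := fun _ _ => rfl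
  haveI tX : IsScalarTower K (Lalg K q) X := ⟨by
    intro c b x
    rw [hsX, Algebra.smul_def, mul_smul]⟩
  haveI tY : IsScalarTower K (Lalg K q) Y := ⟨by
    intro c b y
    rw [hsY, Algebra.smul_def, mul_smul]⟩
  haveI cY : SMulCommClass K (Lalg K q) Y := ⟨by
    intro c b y
    show (algebraMap K (Lalg K q) c) • b • y = b • (algebraMap K (Lalg K q) c) • y
    rw [← mul_smul, ← mul_smul, Algebra.commutes]⟩
  -- the K-linear extension of `lam ∘ g` along `f`
  let fK : X →ₗ[K] Y := f.restrictScalars K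
  have hfK : Function.Injective fK := hf
  let e : X ≃ₗ[K] LinearMap.range fK := LinearEquiv.ofInjective fK hfK
  obtain ⟨p, hp⟩ := Submodule.exists_isCompl (LinearMap.range fK)
  let proj : Y →ₗ[K] LinearMap.range fK :=
    (LinearMap.range fK).linearProjOfIsCompl p hp
  let phi0 : X →ₗ[K] K := (lam K q hq).comp (g.restrictScalars K)
  let phi : Y →ₗ[K] K := phi0.comp ((e.symm : LinearMap.range fK →ₗ[K] X).comp proj)
  have hphi : ∀ xv : X, phi (f xv) = lam K q hq (g xv) := by
    intro xv
    have h1 : proj (fK xv) = ⟨fK xv, LinearMap.mem_range_self fK xv⟩ :=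
      Submodule.linearProjOfIsCompl_apply_left hp ⟨fK xv, LinearMap.mem_range_self fK xv⟩
    have h2 : e.symm ⟨fK xv, LinearMap.mem_range_self fK xv⟩ = xv := by
      apply e.injective
      rw [LinearEquiv.apply_symm_apply]
      ext
      rw [LinearEquiv.ofInjective_apply]
    show phi0 (e.symm (proj (fK xv))) = lam K q hq (g xv)
    rw [h1, h2]
    rfl
  -- the candidate extension
  let h0 : Y → Lalg K q := fun v =>
    phi ((xL K q * yL K q) • v) • (1 : Lalg K q) + (-(q * phi (yL K q • v))) • xL K q +
      phi (xL K q • v) • yL K q + phi v • (xL K q * yL K q)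
  have h0_add : ∀ u v, h0 (u + v) = h0 u + h0 v := by
    intro u v
    simp only [h0, smul_add, map_add]
    module
  have h0_smulK : ∀ (c : K) (v : Y), h0 (c • v) = c • h0 v := by
    intro c v
    have hc : ∀ b : Lalg K q, b • (c • v) = c • (b • v) := fun b => (smul_comm c b v).symm
    simp only [h0, hc, map_smul, smul_eq_mul]
    module
  have h0_smul : ∀ (b : Lalg K q) (v : Y), h0 (b • v) = b * h0 v := by
    intro b v
    have hb : b ∈ Sspan K q := by rw [Sspan_eq_top K q hq]; trivial
    induction hb using Submodule.span_induction with
    | mem b hb =>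
      simp only [Set.mem_insert_iff, Set.mem_singleton_iff] at hb
      rcases hb with rfl | rfl | rfl | rfl
      · rw [one_smul, one_mul]
      · -- b = x
        have E1 : (xL K q * yL K q) • (xL K q • v) = (0 : Y) := by
          rw [← mul_smul, rel_xyx K q hq, zero_smul]
        have E2 : yL K q • (xL K q • v) = (yL K q * xL K q) • v := (mul_smul _ _ _).symm
        have E3 : xL K q • (xL K q • v) = (0 : Y) := by
          rw [← mul_smul, rel_xx, zero_smul]
        have h1 : q • ((yL K q * xL K q) • v) = -((xL K q * yL K q) • v) := by
          rw [← smul_assoc]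
          rw [show (q • (yL K q * xL K q) : Lalg K q) = -(xL K q * yL K q) from rel_qyx K q]
          rw [neg_smul]
        have h2 : phi (q • ((yL K q * xL K q) • v)) = phi (-((xL K q * yL K q) • v)) :=
          congrArg phi h1
        rw [phi.map_smul, smul_eq_mul, map_neg] at h2
        have E4 : -(q * phi ((yL K q * xL K q) • v)) = phi ((xL K q * yL K q) • v) := by
          rw [h2, neg_neg]
        show phi ((xL K q * yL K q) • (xL K q • v)) • (1 : Lalg K q) +
            (-(q * phi (yL K q • (xL K q • v)))) • xL K q +
            phi (xL K q • (xL K q • v)) • yL K q +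
            phi (xL K q • v) • (xL K q * yL K q) = xL K q * h0 v
        rw [E1, E2, E3, E4, map_zero, zero_smul, zero_smul]
        show _ = xL K q * (phi ((xL K q * yL K q) • v) • (1 : Lalg K q) +
            (-(q * phi (yL K q • v))) • xL K q +
            phi (xL K q • v) • yL K q + phi v • (xL K q * yL K q))
        rw [mul_add, mul_add, mul_add, mul_smul_comm, mul_smul_comm, mul_smul_comm,
          mul_smul_comm, mul_one, rel_xx, rel_xxy, smul_zero, smul_zero]
        module
      · -- b = y
        have E1 : (xL K q * yL K q) • (yL K q • v) = (0 : Y) := by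
          rw [← mul_smul, rel_xyy, zero_smul]
        have E2 : yL K q • (yL K q • v) = (0 : Y) := by
          rw [← mul_smul, rel_yy, zero_smul]
        have E3 : xL K q • (yL K q • v) = (xL K q * yL K q) • v := (mul_smul _ _ _).symm
        have E4 : (-(q * phi (yL K q • v))) • (yL K q * xL K q) =
            phi (yL K q • v) • (xL K q * yL K q) := by
          linear_combination (norm := module) (-(phi (yL K q • v))) • rel_qyx K q
        show phi ((xL K q * yL K q) • (yL K q • v)) • (1 : Lalg K q) +
            (-(q * phi (yL K q • (yL K q • v)))) • xL K q +
            phi (xL K q • (yL K q • v)) • yL K q +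
            phi (yL K q • v) • (xL K q * yL K q) = yL K q * h0 v
        rw [E1, E2, E3, map_zero, zero_smul, mul_zero, neg_zero, zero_smul]
        show _ = yL K q * (phi ((xL K q * yL K q) • v) • (1 : Lalg K q) +
            (-(q * phi (yL K q • v))) • xL K q +
            phi (xL K q • v) • yL K q + phi v • (xL K q * yL K q))
        rw [mul_add, mul_add, mul_add, mul_smul_comm, mul_smul_comm, mul_smul_comm,
          mul_smul_comm, mul_one, rel_yy, rel_yxy K q hq, smul_zero, smul_zero, E4]
        module
      · -- b = xy
        have E1 : (xL K q * yL K q) • ((xL K q * yL K q) • v) = (0 : Y) := by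
          rw [← mul_smul, rel_xyxy K q hq, zero_smul]
        have E2 : yL K q • ((xL K q * yL K q) • v) = (0 : Y) := by
          rw [← mul_smul, rel_yxy K q hq, zero_smul]
        have E3 : xL K q • ((xL K q * yL K q) • v) = (0 : Y) := by
          rw [← mul_smul, rel_xxy, zero_smul]
        show phi ((xL K q * yL K q) • ((xL K q * yL K q) • v)) • (1 : Lalg K q) +
            (-(q * phi (yL K q • ((xL K q * yL K q) • v)))) • xL K q +
            phi (xL K q • ((xL K q * yL K q) • v)) • yL K q +
            phi ((xL K q * yL K q) • v) • (xL K q * yL K q) = (xL K q * yL K q) * h0 v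
        rw [E1, E2, E3, map_zero, zero_smul, mul_zero, neg_zero, zero_smul, zero_smul]
        show _ = (xL K q * yL K q) * (phi ((xL K q * yL K q) • v) • (1 : Lalg K q) +
            (-(q * phi (yL K q • v))) • xL K q +
            phi (xL K q • v) • yL K q + phi v • (xL K q * yL K q))
        rw [mul_add, mul_add, mul_add, mul_smul_comm, mul_smul_comm, mul_smul_comm,
          mul_smul_comm, mul_one, rel_xyx K q hq, rel_xyy, rel_xyxy K q hq,
          smul_zero, smul_zero, smul_zero]
        module
    | zero =>
      rw [zero_smul, zero_mul]
      have : h0 ((0 : K) • (0 : Y)) = (0 : K) • h0 0 := h0_smulK 0 0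
      simpa using this
    | add b b' _ _ hb hb' =>
      rw [add_smul, h0_add, hb, hb', add_mul]
    | smul c b _ hb =>
      rw [smul_assoc, h0_smulK, hb, smul_mul_assoc]
  -- assemble the linear map
  let h : Y →ₗ[Lalg K q] Lalg K q :=
    { toFun := h0
      map_add' := h0_add
      map_smul' := fun b v => h0_smul b v }
  refine ⟨h, fun xv => ?_⟩
  show h0 (f xv) = g xv
  have key : ∀ a : Lalg K q, phi (a • f xv) = lam K q hq (a * g xv) := by
    intro a
    rw [← map_smul, hphi, map_smul, smul_eq_mul]
  show phi ((xL K q * yL K q) • f xv) • (1 : Lalg K q) +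
      (-(q * phi (yL K q • f xv))) • xL K q +
      phi (xL K q • f xv) • yL K q + phi (f xv) • (xL K q * yL K q) = g xv
  rw [key (xL K q * yL K q), key (yL K q), key (xL K q), hphi xv]
  exact lam_recon K q hq (g xv)
end
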